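/- Let W be a reduced cyclic word and (P,Q) a linked pair of occurrences of subwords of W of type (3), with P = p₁ Y p₂ and Q = q₁ Ȳ q₂. Then W can be written as c(Y W₁ Ȳ W₂) where W₁ and W₂ are disjoint nonempty linear subwords of W (W₁ starting at p₂ and ending at q₁, W₂ starting at q₂ and ending at p₁). -/

import Mathlib

/-!
Combinatorial model of the Goldman–Turaev Lie bialgebra of curves on a surface
with boundary, following M. Chas, "Combinatorial Lie bialgebras of curves on
surfaces".

The alphabet `𝔸ₙ = {a₁,…,aₙ, ā₁,…,āₙ}` is modelled by `Letter n := Fin n × Bool`,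
with the bar involution flipping the boolean.  Linear words are lists of letters;
a cyclic word is a list up to rotation (`List.IsRotated`).
-/

open List

abbrev Letter (n : ℕ) := Fin n × Bool

namespace ChasCW

variable {n : ℕ}

/-- The bar involution `x ↦ x̄` on letters. -/
def bar (x : Letter n) : Letter n := (x.1, !x.2)

/-- The formal inverse `W̄` of a linear word `W`. -/
def wordInv (w : List (Letter n)) : List (Letter n) := (w.map bar).reverse

/-- A linear word is freely reduced if no letter is followed by its inverse. -/
def Reduced (w : List (Letter n)) : Prop := w.Chain' (fun a b => b ≠ bar a)

/-- A nonempty word all of whose cyclic rotations are freely reduced: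
a representative of a reduced cyclic word. -/
def CyclicallyReduced (w : List (Letter n)) : Prop :=
  w ≠ [] ∧ ∀ i, Reduced (w.rotate i)

/-- The type of cyclic words: lists of letters up to rotation. -/
abbrev CWord (n : ℕ) := Quotient (List.IsRotated.setoid (Letter n))

/-- The cyclic word `c(w)` determined by a linear word `w`. -/
def cw (w : List (Letter n)) : CWord n := Quotient.mk _ w

/-- A surface symbol: a reduced cyclic word containing every letter of the
alphabet exactly once. -/
def SurfaceSymbol (O : List (Letter n)) : Prop :=
  CyclicallyReduced O ∧ ∀ x : Letter n, O.count x = 1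

/-- `w` embeds injectively and orientation-preservingly as a cyclic subsequence
of the cyclic word `O`. -/
def CyclicEmbeds (w O : List (Letter n)) : Prop :=
  w.Nodup ∧ ∃ i ≤ w.length, ∃ j ≤ O.length, (w.rotate i).Sublist (O.rotate j)

open Classical in
/-- The orientation `o(w) ∈ {-1,0,1}` of a cyclic word relative to the surface
symbol `O`: `1` for an orientation-preserving embedding of rings, `-1` for an
orientation-reversing one, `0` otherwise. -/
noncomputable def orient (O w : List (Letter n)) : ℤ :=
  if CyclicEmbeds w O then 1 else if CyclicEmbeds w O.reverse then -1 else 0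

/-- Case (1) of Definition 2.1: `P = p₁p₂`, `Q = q₁q₂` and
`o(c(p̄₁q̄₁p₂q₂)) ≠ 0`. -/
def Linked1 (O : List (Letter n)) (p₁ p₂ q₁ q₂ : Letter n) : Prop :=
  Reduced [p₁, p₂] ∧ Reduced [q₁, q₂] ∧ orient O [bar p₁, bar q₁, p₂, q₂] ≠ 0

/-- Case (2) of Definition 2.1: `P = p₁Yp₂`, `Q = q₁Yq₂`, `p₁ ≠ q₁`, `p₂ ≠ q₂`,
`Y = x₁X x₂` nonempty, and `o(c(p̄₁q̄₁x₁)) = o(c(p₂q₂x̄₂))`. -/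
def Linked2 (O : List (Letter n)) (p₁ p₂ q₁ q₂ x₁ x₂ : Letter n)
    (Y : List (Letter n)) : Prop :=
  Y ≠ [] ∧ Y.head? = some x₁ ∧ Y.getLast? = some x₂ ∧
  p₁ ≠ q₁ ∧ p₂ ≠ q₂ ∧
  Reduced (p₁ :: (Y ++ [p₂])) ∧ Reduced (q₁ :: (Y ++ [q₂])) ∧
  orient O [bar p₁, bar q₁, x₁] = orient O [p₂, q₂, bar x₂]

/-- Case (3) of Definition 2.1: `P = p₁Yp₂`, `Q = q₁Ȳq₂`, `p₁ ≠ q̄₂`, `p₂ ≠ q̄₁`,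
`Y = x₁X x₂` nonempty, and `o(c(q₂p̄₁x₁)) = o(c(q̄₁p₂x̄₂))`. -/
def Linked3 (O : List (Letter n)) (p₁ p₂ q₁ q₂ x₁ x₂ : Letter n)
    (Y : List (Letter n)) : Prop :=
  Y ≠ [] ∧ Y.head? = some x₁ ∧ Y.getLast? = some x₂ ∧
  p₁ ≠ bar q₂ ∧ p₂ ≠ bar q₁ ∧
  Reduced (p₁ :: (Y ++ [p₂])) ∧ Reduced (q₁ :: (wordInv Y ++ [q₂])) ∧
  orient O [q₂, bar p₁, x₁] = orient O [bar q₁, p₂, bar x₂]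

/-- `(P,Q)` is an `O`-linked pair (Definition 2.1). -/
def LinkedPair (O P Q : List (Letter n)) : Prop :=
  (∃ p₁ p₂ q₁ q₂, P = [p₁, p₂] ∧ Q = [q₁, q₂] ∧ Linked1 O p₁ p₂ q₁ q₂) ∨
  (∃ p₁ p₂ q₁ q₂ x₁ x₂ Y, P = p₁ :: (Y ++ [p₂]) ∧ Q = q₁ :: (Y ++ [q₂]) ∧
    Linked2 O p₁ p₂ q₁ q₂ x₁ x₂ Y) ∨
  (∃ p₁ p₂ q₁ q₂ x₁ x₂ Y, P = p₁ :: (Y ++ [p₂]) ∧ Q = q₁ :: (wordInv Y ++ [q₂]) ∧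
    Linked3 O p₁ p₂ q₁ q₂ x₁ x₂ Y)

/-- The sign of a linked pair `(P,Q)`, computed from the (unique) decomposition
of `P` and `Q` prescribed by Definition 2.1. -/
noncomputable def signLP (O P Q : List (Letter n)) : ℤ :=
  match P, Q with
  | p₁ :: P', q₁ :: Q' =>
    match P'.getLast?, Q'.getLast? with
    | some p₂, some q₂ =>
      let Y := P'.dropLast
      let Z := Q'.dropLast
      if Y = [] then orient O [bar p₁, bar q₁, p₂, q₂]
      else
        match Y.head?, Y.getLast? with
        | some x₁, some _ =>
          if Z = wordInv Y then orient O [q₂, bar p₁, x₁]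
          else orient O [bar p₁, bar q₁, x₁]
        | _, _ => 0
    | _, _ => 0
  | _, _ => 0

/-- The subword of length `l` of (a large power of) the cyclic word `V`,
starting at position `i`.  This encodes occurrences of subwords of powers
of `V`. -/
def segment (V : List (Letter n)) (i l : ℕ) : List (Letter n) :=
  (((List.replicate (l + 1) V).flatten).rotate i).take l

/-- The set `LP₁(W)` of linked pairs of occurrences of subwords of `W`,
an occurrence being encoded by its starting position and its length. -/
def LP1 (O W : List (Letter n)) : Set ((ℕ × ℕ) × (ℕ × ℕ)) :=
  {e | e.1.1 < W.length ∧ e.2.1 < W.length ∧ e.1.2 ≤ W.length ∧ e.2.2 ≤ W.length ∧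
    LinkedPair O (segment W e.1.1 e.1.2) (segment W e.2.1 e.2.2)}

/-- The set `LP₂(V,W)` of linked pairs of the pair of cyclic words `(V,W)`:
pairs of occurrences of subwords of powers of `V` resp. `W` which are linked.
(The normalization `len V^{j-1} < len P ≤ len V^j` is implicit in the encoding
of an occurrence by a starting position `< len V` and a length.) -/
def LP2 (O V W : List (Letter n)) : Set ((ℕ × ℕ) × (ℕ × ℕ)) :=
  {e | e.1.1 < V.length ∧ e.2.1 < W.length ∧
    LinkedPair O (segment V e.1.1 e.1.2) (segment W e.2.1 e.2.2)}

end ChasCW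

namespace ChasCW

/-- Lemma 2.3: if `(P,Q) = (p₁Yp₂, q₁Ȳq₂)` is a linked pair of
type (3) of occurrences of subwords of a reduced cyclic word `W`, then
`W = c(Y W₁ Ȳ W₂)` with `W₁`, `W₂` disjoint nonempty linear subwords of `W`
(`W₁` starting at `p₂` and ending at `q₁`, `W₂` starting at `q₂` and ending
at `p₁`). -/
lemma bar_bar' (x : Letter n) : bar (bar x) = x := by simp [bar]

lemma bar_ne_self' (x : Letter n) : bar x ≠ x := by
  simp [bar, Prod.ext_iff]

/-- Key overlap lemma: an occurrence of a nonempty word `y` (of length `m`)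
and of its formal inverse at offset `t < m` inside a cyclically reduced
ambient word (given by the indexing function `u`) is impossible. -/
lemma no_overlap (u y : ℕ → Letter n) (m t a : ℕ) (hm : 1 ≤ m) (ht : t < m)
    (hu : ∀ k, u (k + 1) ≠ bar (u k))
    (hY : ∀ s, s < m → u (a + s) = y s)
    (hI : ∀ s, s < m → u (a + t + s) = bar (y (m - 1 - s))) : False := by
  have key : ∀ s, t ≤ s → s < m → y s = bar (y (m - 1 + t - s)) := by
    intro s hts hsm
    have h1 := hY s hsm
    have h2 := hI (s - t) (by omega)
    rw [show a + t + (s - t) = a + s by omega,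
        show m - 1 - (s - t) = m - 1 + t - s by omega, h1] at h2
    exact h2
  rcases Nat.even_or_odd (m - 1 + t) with ⟨c, hc⟩ | ⟨c, hc⟩
  · have h := key c (by omega) (by omega)
    rw [show m - 1 + t - c = c by omega] at h
    exact bar_ne_self' (y c) h.symm
  · have h := key (c + 1) (by omega) (by omega)
    rw [show m - 1 + t - (c + 1) = c by omega] at h
    have h1 := hY (c + 1) (by omega)
    have h2 := hY c (by omega)
    have h3 := hu (a + c)
    rw [show a + c + 1 = a + (c + 1) by omega, h1, h2] at h3
    exact h3 h

theorem linked_pair_type3_decomposition {n : ℕ} (O W : List (Letter n))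
    (hO : SurfaceSymbol O) (hW : CyclicallyReduced W)
    (p₁ p₂ q₁ q₂ x₁ x₂ : Letter n) (Y : List (Letter n))
    (h3 : Linked3 O p₁ p₂ q₁ q₂ x₁ x₂ Y)
    (i j : ℕ) (hi : i < W.length) (hj : j < W.length)
    (hlenP : Y.length + 2 ≤ W.length) (hlenQ : Y.length + 2 ≤ W.length)
    (hP : (p₁ :: (Y ++ [p₂])) <+: W.rotate i)
    (hQ : (q₁ :: (wordInv Y ++ [q₂])) <+: W.rotate j) :
    ∃ W₁ W₂ : List (Letter n), W₁ ≠ [] ∧ W₂ ≠ [] ∧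
      W₁.head? = some p₂ ∧ W₁.getLast? = some q₁ ∧
      W₂.head? = some q₂ ∧ W₂.getLast? = some p₁ ∧
      W.rotate ((i + 1) % W.length) = Y ++ W₁ ++ wordInv Y ++ W₂ := by
  obtain ⟨hWne, hWred⟩ := hW
  have hL : 0 < W.length := List.length_pos_iff.2 hWne
  have hm : 1 ≤ Y.length := List.length_pos_iff.2 h3.1
  set L := W.length with hLdef
  set m := Y.length with hmdef
  -- the cyclic indexing function
  set u : ℕ → Letter n := fun k => W.get ⟨k % L, Nat.mod_lt _ hL⟩ with hudef
  set y : ℕ → Letter n := fun s => Y.getD s p₁ with hydef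
  have modadd : ∀ a b : ℕ, (a % L + b) % L = (a + b) % L := fun a b => by
    rw [Nat.add_mod, Nat.mod_mod, ← Nat.add_mod]
  have humod : ∀ k k', k % L = k' % L → u k = u k' := by
    intro k k' h
    simp only [hudef]
    congr 1
    exact Fin.ext h
  have huper : ∀ k, u (k + L) = u k := by
    intro k; exact humod _ _ (by rw [Nat.add_mod_right])
  have hWgetu : ∀ (k r : ℕ) (hr : r < W.length), r % L = k % L → W[r]'hr = u k := by
    intro k r hr h
    simp only [hudef, List.get_eq_getElem]
    congr 1
    rw [← h, Nat.mod_eq_of_lt (by omega)]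
  have hyget : ∀ (s : ℕ) (hs : s < Y.length), Y[s]'hs = y s := by
    intro s hs
    simp only [hydef]
    rw [List.getD_eq_getElem _ _ hs]
  -- cyclic reducedness in terms of u
  have hu : ∀ k, u (k + 1) ≠ bar (u k) := by
    intro k
    have hr := hWred (k % L)
    simp only [Reduced, List.Chain', List.isChain_iff_getElem] at hr
    have h0 := hr 0 (by rw [List.length_rotate, ← hLdef]; omega)
    simp only [List.get_eq_getElem, List.getElem_rotate, ← hLdef] at h0
    rwa [hWgetu (k + 1) ((0 + 1 + k % L) % L) (Nat.mod_lt _ hL)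
          (by rw [Nat.mod_mod, show 0 + 1 + k % L = k % L + 1 by omega, modadd]),
         hWgetu k ((0 + k % L) % L) (Nat.mod_lt _ hL)
          (by rw [Nat.mod_mod, Nat.zero_add, Nat.mod_mod])] at h0
  -- occurrence of P
  have hrotget : ∀ (r s : ℕ) (hs : s < L), (W.rotate r)[s]'(by rw [List.length_rotate, ← hLdef]; omega) = u (r + s) := by
    intro r s hs
    rw [List.getElem_rotate]
    exact hWgetu (r + s) ((s + r) % W.length) (Nat.mod_lt _ hL)
      (by rw [← hLdef, Nat.mod_mod]; congr 1; omega)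
  have hp₁ : u i = p₁ := by
    have h := hP.getElem (i := 0) (by simp)
    rw [hrotget i 0 (by omega)] at h
    simpa using h.symm
  have hYocc : ∀ s, s < m → u (i + 1 + s) = y s := by
    intro s hs
    have h := hP.getElem (i := s + 1) (by simp; omega)
    rw [hrotget i (s + 1) (by omega)] at h
    rw [show i + (s + 1) = i + 1 + s by omega] at h
    rw [← h]
    simp only [List.getElem_cons_succ]
    rw [List.getElem_append_left (by omega), hyget s (by omega)]
  have hp₂ : u (i + 1 + m) = p₂ := by
    have h := hP.getElem (i := m + 1) (by simp [hmdef])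
    rw [hrotget i (m + 1) (by omega)] at h
    rw [show i + (m + 1) = i + 1 + m by omega] at h
    rw [← h]
    simp only [List.getElem_cons_succ]
    rw [List.getElem_append_right (by omega)]
    simp
  -- occurrence of Q
  have hlenInv : (wordInv Y).length = m := by simp [wordInv, hmdef]
  have hq₁ : u j = q₁ := by
    have h := hQ.getElem (i := 0) (by simp)
    rw [hrotget j 0 (by omega)] at h
    simpa using h.symm
  have hInvget : ∀ (s : ℕ) (hs : s < (wordInv Y).length), (wordInv Y)[s]'hs = bar (y (m - 1 - s)) := by
    intro s hs
    have hsm : s < m := by omega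
    simp only [wordInv]
    rw [List.getElem_reverse, List.getElem_map]
    congr 1
    rw [hyget]
    congr 1
    simp [hmdef]
  have hIocc : ∀ s, s < m → u (j + 1 + s) = bar (y (m - 1 - s)) := by
    intro s hs
    have h := hQ.getElem (i := s + 1) (by simp [hlenInv]; omega)
    rw [hrotget j (s + 1) (by omega)] at h
    rw [show j + (s + 1) = j + 1 + s by omega] at h
    rw [← h]
    simp only [List.getElem_cons_succ]
    rw [List.getElem_append_left (by omega), hInvget s (by omega)]
  have hq₂ : u (j + 1 + m) = q₂ := by
    have h := hQ.getElem (i := m + 1) (by simp [hlenInv])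
    rw [hrotget j (m + 1) (by omega)] at h
    rw [show j + (m + 1) = j + 1 + m by omega] at h
    rw [← h]
    simp only [List.getElem_cons_succ]
    rw [List.getElem_append_right (by omega)]
    simp [hlenInv]
  -- the offset between the two occurrences
  set t₀ : ℕ := (j + L - i) % L with htdef
  have ht₀L : t₀ < L := Nat.mod_lt _ hL
  have hshift : ∀ s, u (i + 1 + t₀ + s) = u (j + 1 + s) := by
    intro s
    apply humod
    rw [show i + 1 + t₀ + s = t₀ + (i + 1 + s) by omega, htdef, modadd]
    rw [show j + L - i + (i + 1 + s) = (j + 1 + s) + L by omega, Nat.add_mod_right]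
  have hcase : t₀ < m ∨ t₀ = m ∨ (m + 1 ≤ t₀ ∧ t₀ + m + 1 ≤ L) ∨ t₀ + m = L ∨ (L + 1 ≤ t₀ + m ∧ t₀ < L) := by omega
  rcases hcase with hcase | hcase | ⟨hc1, hc2⟩ | hcase | ⟨hc1, hc2⟩
  · -- Ȳ starts inside Y : impossible overlap
    exact (no_overlap u y m t₀ (i + 1) hm hcase hu hYocc
      (fun s hs => (hshift s).trans (hIocc s hs))).elim
  · -- Ȳ starts exactly at p₂ : contradicts reducedness
    exfalso
    have h1 : u (i + 1 + m) = bar (y (m - 1)) := by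
      have h := (hshift 0).trans (hIocc 0 (by omega))
      rw [hcase] at h
      exact h
    have h2 := hu (i + m)
    have h3 := hYocc (m - 1) (by omega)
    rw [show i + m + 1 = i + 1 + m by omega, h1,
        show i + m = i + 1 + (m - 1) by omega, h3] at h2
    exact h2 rfl
  · -- the good case : construct W₁ and W₂
    refine ⟨(List.range (t₀ - m)).map (fun s => u (i + 1 + m + s)),
            (List.range (L - t₀ - m)).map (fun s => u (i + 1 + t₀ + m + s)),
            ?_, ?_, ?_, ?_, ?_, ?_, ?_⟩
    · simp only [ne_eq, List.map_eq_nil_iff, List.range_eq_nil]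
      omega
    · simp only [ne_eq, List.map_eq_nil_iff, List.range_eq_nil]
      omega
    · rw [List.head?_eq_getElem?, List.getElem?_eq_getElem (by simp; omega)]
      simp only [List.getElem_map, List.getElem_range]
      exact congrArg some hp₂
    · have hq₁' : u (i + 1 + m + (t₀ - m - 1)) = q₁ := by
        rw [show i + 1 + m + (t₀ - m - 1) = i + t₀ by omega]
        have h := hshift (L - 1)
        rw [show i + 1 + t₀ + (L - 1) = i + t₀ + L by omega, huper,
            show j + 1 + (L - 1) = j + L by omega, huper, hq₁] at h
        exact h
      rw [List.getLast?_eq_getElem?, List.getElem?_eq_getElem (by simp; omega)]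
      simp only [List.getElem_map, List.getElem_range, List.length_map, List.length_range]
      exact congrArg some hq₁'
    · rw [List.head?_eq_getElem?, List.getElem?_eq_getElem (by simp; omega)]
      simp only [List.getElem_map, List.getElem_range]
      exact congrArg some ((hshift m).trans hq₂)
    · have hp₁' : u (i + 1 + t₀ + m + (L - t₀ - m - 1)) = p₁ := by
        rw [show i + 1 + t₀ + m + (L - t₀ - m - 1) = i + L by omega, huper, hp₁]
      rw [List.getLast?_eq_getElem?, List.getElem?_eq_getElem (by simp; omega)]
      simp only [List.getElem_map, List.getElem_range, List.length_map, List.length_range]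
      exact congrArg some hp₁'
    · rw [List.rotate_mod]
      apply List.ext_getElem
      · simp only [List.length_rotate, List.length_append, List.length_map,
          List.length_range, hlenInv]
        omega
      · intro k h₁ h₂
        have hkL : k < L := by rw [List.length_rotate, ← hLdef] at h₁; exact h₁
        rw [hrotget (i + 1) k hkL]
        rcases Nat.lt_or_ge k m with hk | hk
        · rw [List.getElem_append_left (by simp [hlenInv]; omega),
             List.getElem_append_left (by simp; omega),
             List.getElem_append_left (by omega), hyget k (by omega)]
          exact hYocc k hk
        rcases Nat.lt_or_ge k t₀ with hk2 | hk2
        · rw [List.getElem_append_left (by simp [hlenInv]; omega),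
             List.getElem_append_left (by simp; omega),
             List.getElem_append_right (by omega)]
          simp only [List.getElem_map, List.getElem_range]
          rw [show i + 1 + m + (k - Y.length) = i + 1 + k by omega]
        rcases Nat.lt_or_ge k (t₀ + m) with hk3 | hk3
        · rw [List.getElem_append_left (by simp [hlenInv]; omega),
             List.getElem_append_right (by simp; omega)]
          simp only [List.length_append, List.length_map, List.length_range]
          rw [hInvget _ (by simp [hlenInv]; omega)]
          have h5 : u (i + 1 + t₀ + (k - t₀)) = bar (y (m - 1 - (k - t₀))) :=
            (hshift _).trans (hIocc _ (by omega))
          rw [show i + 1 + t₀ + (k - t₀) = i + 1 + k by omega] at h5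
          rw [show m - 1 - (k - (Y.length + (t₀ - m))) = m - 1 - (k - t₀) by omega]
          exact h5
        · rw [List.getElem_append_right (by simp [hlenInv]; omega)]
          simp only [List.getElem_map, List.getElem_range, List.length_append,
            List.length_map, List.length_range, hlenInv]
          rw [show i + 1 + t₀ + m + (k - (Y.length + (t₀ - m) + m)) = i + 1 + k by omega]
  · -- Ȳ ends exactly at p₁ : contradicts reducedness
    exfalso
    have h1 : u (i + 1 + t₀ + (m - 1)) = bar (y 0) := by
      rw [hshift]
      have h := hIocc (m - 1) (by omega)
      rwa [show m - 1 - (m - 1) = 0 by omega] at h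
    rw [show i + 1 + t₀ + (m - 1) = i + L by omega, huper, hp₁] at h1
    have h2 := hu i
    rw [hp₁, h1, bar_bar'] at h2
    exact h2 (hYocc 0 (by omega))
  · -- Ȳ wraps around onto Y : impossible overlap
    exfalso
    refine no_overlap u (fun s => bar (y (m - 1 - s))) m (L - t₀) (i + 1 + t₀) hm
      (by omega) hu (fun s hs => (hshift s).trans (hIocc s hs)) ?_
    intro s hs
    simp only [bar_bar']
    rw [show m - 1 - (m - 1 - s) = s by omega,
        show i + 1 + t₀ + (L - t₀) + s = i + 1 + s + L by omega, huper]
    exact hYocc s hs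

end ChasCW
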